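/- arXiv:1202.2542 — 3 statements merged into one kernel-verified Lean document; each statement's English description precedes it below -/
import Mathlib

section
/- Let K(t,u) = 1 + (14/15)·(4(t−1/2)(u−1/2))^{1/5} for t,u ∈ [0,1], and let f₂(t) = 3/4 + √(21/5)·(2^{1/5}/4)·(t−1/2)^{1/5}. Then ∫₀¹ K(t,u)·f₂(u)² du = f₂(t) for all t ∈ [0,1]. -/
noncomputable def oddRoot (n : ℕ) (x : ℝ) : ℝ :=
  if 0 ≤ x then x ^ ((1 : ℝ) / n) else -((-x) ^ ((1 : ℝ) / n))

lemma oddRoot5_zero : oddRoot 5 0 = 0 := by simp [oddRoot]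

lemma oddRoot5_neg (x : ℝ) : oddRoot 5 (-x) = -oddRoot 5 x := by
  rcases lt_trichotomy x 0 with h|h|h
  · rw [oddRoot, oddRoot, if_pos (by linarith), if_neg (not_le.2 h), neg_neg]
  · simp [h, oddRoot]
  · rw [oddRoot, oddRoot, if_neg (by push_neg; linarith), if_pos h.le, neg_neg]

lemma oddRoot5_mul (x y : ℝ) : oddRoot 5 (x * y) = oddRoot 5 x * oddRoot 5 y := by
  have base : ∀ a b : ℝ, 0 ≤ a → 0 ≤ b → oddRoot 5 (a * b) = oddRoot 5 a * oddRoot 5 b := by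
    intro a b ha hb
    rw [oddRoot, oddRoot, oddRoot, if_pos ha, if_pos hb, if_pos (mul_nonneg ha hb),
      Real.mul_rpow ha hb]
  have ex : oddRoot 5 x = -oddRoot 5 (-x) := by rw [oddRoot5_neg, neg_neg]
  have ey : oddRoot 5 y = -oddRoot 5 (-y) := by rw [oddRoot5_neg, neg_neg]
  rcases le_or_gt 0 x with hx|hx <;> rcases le_or_gt 0 y with hy|hy
  · exact base x y hx hy
  · rw [show x * y = -(x * (-y)) by ring, oddRoot5_neg, base x (-y) hx (by linarith), ey]; ring
  · rw [show x * y = -((-x) * y) by ring, oddRoot5_neg, base (-x) y (by linarith) hy, ex]; ring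
  · rw [show x * y = (-x) * (-y) by ring, base (-x) (-y) (by linarith) (by linarith), ex, ey]
    ring

lemma oddRoot5_sq (x : ℝ) : (oddRoot 5 x)^2 = |x| ^ ((2:ℝ)/5) := by
  have key : ∀ a : ℝ, 0 ≤ a → (a ^ ((1:ℝ)/(5:ℕ)))^2 = a ^ ((2:ℝ)/5) := by
    intro a ha
    rw [← Real.rpow_natCast (a ^ ((1:ℝ)/(5:ℕ))) 2, ← Real.rpow_mul ha]
    norm_num
  rcases le_or_gt 0 x with hx|hx
  · rw [oddRoot, if_pos hx, abs_of_nonneg hx, key x hx]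
  · rw [oddRoot, if_neg (not_le.2 hx), abs_of_neg hx, neg_sq, key (-x) (by linarith)]

lemma continuous_oddRoot5 : Continuous (oddRoot 5) := by
  have h1 : Continuous fun x : ℝ => x ^ ((1:ℝ)/5) := by
    rw [continuous_iff_continuousAt]; intro x
    exact Real.continuousAt_rpow_const x _ (Or.inr (by norm_num))
  have h2 : Continuous fun x : ℝ => -((-x) ^ ((1:ℝ)/5)) := (h1.comp continuous_neg).neg
  have : (oddRoot 5) = fun x : ℝ =>
      if (fun _ : ℝ => (0:ℝ)) x ≤ id x then x ^ ((1:ℝ)/5) else -((-x) ^ ((1:ℝ)/5)) := rfl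
  rw [this]
  apply Continuous.if_le h1 h2 continuous_const continuous_id
  intro x hx
  simp only [id] at hx
  rw [← hx]
  simp [Real.zero_rpow (by norm_num : (1:ℝ)/(5:ℕ) ≠ 0)]

lemma odd_integral {f : ℝ → ℝ} (hf : Continuous f) (hodd : ∀ x, f (-x) = -f x) (a : ℝ) :
    ∫ x in (-a)..a, f x = 0 := by
  have h1 : (∫ x in (-a)..(0:ℝ), f x) = ∫ x in (0:ℝ)..a, f (-x) := by
    rw [intervalIntegral.integral_comp_neg f]; simp
  have h2 : (∫ x in (0:ℝ)..a, f (-x)) = - ∫ x in (0:ℝ)..a, f x := by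
    simp_rw [hodd]; exact intervalIntegral.integral_neg
  have ia : IntervalIntegrable f MeasureTheory.volume (-a) 0 := hf.intervalIntegrable _ _
  have ib : IntervalIntegrable f MeasureTheory.volume 0 a := hf.intervalIntegrable _ _
  have h3 := intervalIntegral.integral_add_adjacent_intervals ia ib
  rw [← h3, h1, h2]; ring

noncomputable def f₂ (t : ℝ) : ℝ :=
  3/4 + Real.sqrt (21/5) * ((2:ℝ) ^ ((1:ℝ)/5) / 4) * oddRoot 5 (t - 1/2)

lemma I1 : (∫ u in (0:ℝ)..1, oddRoot 5 (u - 1/2)) = 0 := by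
  rw [intervalIntegral.integral_comp_sub_right (a := 0) (b := 1) (oddRoot 5) (1/2),
    show (0:ℝ) - 1/2 = -(1/2) by norm_num, show (1:ℝ) - 1/2 = 1/2 by norm_num]
  exact odd_integral continuous_oddRoot5 oddRoot5_neg _

lemma I3 : (∫ u in (0:ℝ)..1, (oddRoot 5 (u - 1/2))^3) = 0 := by
  rw [intervalIntegral.integral_comp_sub_right (a := 0) (b := 1) (fun x => (oddRoot 5 x)^3) (1/2),
    show (0:ℝ) - 1/2 = -(1/2) by norm_num, show (1:ℝ) - 1/2 = 1/2 by norm_num]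
  exact odd_integral (f := fun x => (oddRoot 5 x)^3) (continuous_oddRoot5.pow 3)
    (fun x => by rw [oddRoot5_neg]; ring) _

lemma integral_half : (∫ x in (0:ℝ)..(1/2), x ^ ((2:ℝ)/5)) = 5/7 * (1/2:ℝ) ^ ((7:ℝ)/5) := by
  rw [integral_rpow (Or.inl (by norm_num))]
  rw [Real.zero_rpow (by norm_num)]
  norm_num
  ring

lemma I2 : (∫ u in (0:ℝ)..1, (oddRoot 5 (u - 1/2))^2) = 10/7 * (1/2:ℝ) ^ ((7:ℝ)/5) := by
  have hcont : Continuous fun u : ℝ => (oddRoot 5 (u - 1/2))^2 :=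
    ((continuous_oddRoot5.comp (continuous_id.sub continuous_const)).pow 2)
  have ii1 : IntervalIntegrable (fun u : ℝ => (oddRoot 5 (u - 1/2))^2)
      MeasureTheory.volume 0 (1/2) := hcont.intervalIntegrable _ _
  have ii2 : IntervalIntegrable (fun u : ℝ => (oddRoot 5 (u - 1/2))^2)
      MeasureTheory.volume (1/2) 1 := hcont.intervalIntegrable _ _
  have split := intervalIntegral.integral_add_adjacent_intervals (a := (0:ℝ)) (b := 1/2) (c := 1)
    ii1 ii2
  rw [← split]
  have left : (∫ u in (0:ℝ)..(1/2), (oddRoot 5 (u - 1/2))^2)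
      = ∫ u in (0:ℝ)..(1/2), (1/2 - u) ^ ((2:ℝ)/5) := by
    apply intervalIntegral.integral_congr
    intro u hu
    rw [Set.uIcc_of_le (by norm_num : (0:ℝ) ≤ 1/2)] at hu
    show (oddRoot 5 (u - 1/2))^2 = (1/2 - u) ^ ((2:ℝ)/5)
    rw [oddRoot5_sq, abs_of_nonpos (by linarith [hu.2])]
    ring_nf
  have right : (∫ u in (1/2:ℝ)..1, (oddRoot 5 (u - 1/2))^2)
      = ∫ u in (1/2:ℝ)..1, (u - 1/2) ^ ((2:ℝ)/5) := by
    apply intervalIntegral.integral_congr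
    intro u hu
    rw [Set.uIcc_of_le (by norm_num : (1/2:ℝ) ≤ 1)] at hu
    show (oddRoot 5 (u - 1/2))^2 = (u - 1/2) ^ ((2:ℝ)/5)
    rw [oddRoot5_sq, abs_of_nonneg (by linarith [hu.1])]
  rw [left, right,
    intervalIntegral.integral_comp_sub_left (a := 0) (b := 1/2) (fun x => x ^ ((2:ℝ)/5)) (1/2),
    intervalIntegral.integral_comp_sub_right (a := 1/2) (b := 1) (fun x => x ^ ((2:ℝ)/5)) (1/2),
    show (1/2:ℝ) - 1/2 = 0 by norm_num, show (1/2:ℝ) - 0 = 1/2 by norm_num,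
    show (1:ℝ) - 1/2 = 1/2 by norm_num, integral_half]
  ring

theorem stmt1 (t : ℝ) (ht : t ∈ Set.Icc (0:ℝ) 1) :
    ∫ u in (0:ℝ)..1,
      (1 + (14/15) * oddRoot 5 (4 * (t - 1/2) * (u - 1/2))) * (f₂ u)^2 = f₂ t := by
  have hconts : Continuous fun u : ℝ => oddRoot 5 (u - 1/2) :=
    continuous_oddRoot5.comp (continuous_id.sub continuous_const)
  set c : ℝ := Real.sqrt (21/5) * ((2:ℝ) ^ ((1:ℝ)/5) / 4) with hc
  set k : ℝ := 14/15 * oddRoot 5 (4 * (t - 1/2)) with hk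
  have expand : (fun u : ℝ => (1 + (14/15) * oddRoot 5 (4 * (t - 1/2) * (u - 1/2))) * (f₂ u)^2)
      = fun u : ℝ => 9/16 + ((3/2*c + 9/16*k) * oddRoot 5 (u - 1/2)
        + ((c^2 + 3/2*k*c) * (oddRoot 5 (u - 1/2))^2 + (k*c^2) * (oddRoot 5 (u - 1/2))^3)) := by
    funext u
    rw [oddRoot5_mul (4 * (t - 1/2)) (u - 1/2)]
    simp only [f₂, hc, hk]
    ring
  rw [expand]
  have ib : IntervalIntegrable (fun u : ℝ => (3/2*c + 9/16*k) * oddRoot 5 (u - 1/2))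
      MeasureTheory.volume 0 1 := (continuous_const.mul hconts).intervalIntegrable _ _
  have ic : IntervalIntegrable (fun u : ℝ => (c^2 + 3/2*k*c) * (oddRoot 5 (u - 1/2))^2)
      MeasureTheory.volume 0 1 := (continuous_const.mul (hconts.pow 2)).intervalIntegrable _ _
  have id' : IntervalIntegrable (fun u : ℝ => (k*c^2) * (oddRoot 5 (u - 1/2))^3)
      MeasureTheory.volume 0 1 := (continuous_const.mul (hconts.pow 3)).intervalIntegrable _ _
  rw [intervalIntegral.integral_add intervalIntegrable_const (ib.add (ic.add id')),
    intervalIntegral.integral_add ib (ic.add id'),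
    intervalIntegral.integral_add ic id',
    intervalIntegral.integral_const_mul, intervalIntegral.integral_const_mul,
    intervalIntegral.integral_const_mul, I1, I2, I3, intervalIntegral.integral_const]
  -- now pure arithmetic
  set p : ℝ := (2:ℝ) ^ ((1:ℝ)/5) with hp
  have hppos : 0 < p := Real.rpow_pos_of_pos two_pos _
  have hpp : (2:ℝ) ^ ((2:ℝ)/5) = p ^ 2 := by
    rw [hp, ← Real.rpow_natCast ((2:ℝ) ^ ((1:ℝ)/5)) 2, ← Real.rpow_mul (by norm_num)]
    norm_num
  have h4 : oddRoot 5 (4:ℝ) = p ^ 2 := by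
    rw [oddRoot, if_pos (by norm_num : (0:ℝ) ≤ 4), show ((5:ℕ):ℝ) = 5 by norm_num,
      show (4:ℝ) = (2:ℝ) ^ ((2:ℝ)) by
        rw [show ((2:ℝ):ℝ) = ((2:ℕ):ℝ) by norm_num, Real.rpow_natCast]; norm_num,
      ← Real.rpow_mul (by norm_num), ← hpp]
    norm_num
  have h7 : ((1:ℝ)/2) ^ ((7:ℝ)/5) = (2 * p ^ 2)⁻¹ := by
    rw [one_div, Real.inv_rpow (by norm_num : (0:ℝ) ≤ 2)]
    congr 1
    rw [show (7:ℝ)/5 = 1 + 2/5 by norm_num, Real.rpow_add two_pos, Real.rpow_one, hpp]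
  have hq : Real.sqrt (21/5) ^ 2 = 21/5 := Real.sq_sqrt (by norm_num)
  have hc2 : c ^ 2 = 21 * p ^ 2 / 80 := by
    have : c ^ 2 = Real.sqrt (21/5) ^ 2 * (p / 4) ^ 2 := by rw [hc, hp]; ring
    rw [this, hq]; ring
  rw [hk, oddRoot5_mul 4 (t - 1/2), h4, h7, hc2]
  simp only [f₂]
  simp only [smul_eq_mul, mul_zero]
  have hpne : p ≠ 0 := ne_of_gt hppos
  rw [hc, hp]
  field_simp
  ring
end

section
/- Let k ≥ 2 and suppose for each n > k that ξ_n ∈ (0,1) satisfies (1 + ξ_n^{n−1}/2)^{k+1} − (1 − ξ_n^{n−1}/2)^{k+1} = (k+1)·ξ_n^{n−k}. If along a subsequence n_p the sequence α_p = ξ_{n_p}^{n_p−1} converges to some α ∈ [0,1] and ξ_{n_p} → 1, then α satisfies (1+α/2)^{k+1} − (1−α/2)^{k+1} = (k+1)·α, hence α = 0. -/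
open Filter Set

theorem stmt13 (k : ℕ) (hk : 2 ≤ k) (ξ : ℕ → ℝ)
    (hξ : ∀ n, k < n → ξ n ∈ Set.Ioo (0:ℝ) 1 ∧
      (1 + (ξ n)^(n-1)/2)^(k+1) - (1 - (ξ n)^(n-1)/2)^(k+1) = ((k:ℝ)+1) * (ξ n)^(n-k))
    (np : ℕ → ℕ) (hnp : StrictMono np) (hnpk : ∀ p, k < np p)
    (α : ℝ) (hα : α ∈ Set.Icc (0:ℝ) 1)
    (hαlim : Filter.Tendsto (fun p => (ξ (np p))^(np p - 1)) Filter.atTop (nhds α))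
    (hβlim : Filter.Tendsto (fun p => ξ (np p)) Filter.atTop (nhds 1)) :
    (1 + α/2)^(k+1) - (1 - α/2)^(k+1) = ((k:ℝ)+1) * α ∧ α = 0 := by
  have key : ∀ p, (1 + (ξ (np p))^(np p - 1)/2)^(k+1) - (1 - (ξ (np p))^(np p - 1)/2)^(k+1)
      = ((k:ℝ)+1) * ((ξ (np p))^(np p - 1) / (ξ (np p))^(k-1)) := by
    intro p
    have h := hξ (np p) (hnpk p)
    have hpos : (0:ℝ) < ξ (np p) := h.1.1
    have hne : (ξ (np p)) ^ (k-1) ≠ 0 := pow_ne_zero _ hpos.ne'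
    have hexp : (np p - 1) = (np p - k) + (k - 1) := by
      have := hnpk p; omega
    rw [h.2, hexp, pow_add, mul_div_assoc, div_self hne, mul_one]
  have h1 : Tendsto (fun p => (1 + (ξ (np p))^(np p - 1)/2)^(k+1)
      - (1 - (ξ (np p))^(np p - 1)/2)^(k+1)) atTop
      (nhds ((1 + α/2)^(k+1) - (1 - α/2)^(k+1))) :=
    (((hαlim.div_const 2).const_add 1).pow _).sub
      (((hαlim.div_const 2).const_sub 1).pow _)
  have h2 : Tendsto (fun p => ((k:ℝ)+1) * ((ξ (np p))^(np p - 1) / (ξ (np p))^(k-1)))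
      atTop (nhds (((k:ℝ)+1) * α)) := by
    have hp : Tendsto (fun p => (ξ (np p))^(k-1)) atTop (nhds 1) := by
      simpa using hβlim.pow (k-1)
    have := (hαlim.div hp one_ne_zero).const_mul ((k:ℝ)+1)
    simpa using this
  have heq : (1 + α/2)^(k+1) - (1 - α/2)^(k+1) = ((k:ℝ)+1) * α :=
    tendsto_nhds_unique (h1.congr key) h2
  refine ⟨heq, ?_⟩
  by_contra hne0
  have hαpos : 0 < α := lt_of_le_of_ne hα.1 (Ne.symm hne0)
  set g : ℝ → ℝ := fun t => (1 + t/2)^(k+1) - (1 - t/2)^(k+1) - ((k:ℝ)+1)*t with hg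
  have hderiv : ∀ t : ℝ, HasDerivAt g
      (((k:ℝ)+1)/2 * ((1+t/2)^k + (1-t/2)^k) - ((k:ℝ)+1)) t := by
    intro t
    have ha : HasDerivAt (fun t : ℝ => 1 + t/2) (1/2) t := by
      simpa using ((hasDerivAt_id t).div_const 2).const_add 1
    have hb : HasDerivAt (fun t : ℝ => 1 - t/2) (-(1/2)) t := by
      simpa using ((hasDerivAt_id t).div_const 2).const_sub 1
    have hc : HasDerivAt (fun t : ℝ => ((k:ℝ)+1)*t) ((k:ℝ)+1) t := by
      simpa using (hasDerivAt_id t).const_mul ((k:ℝ)+1)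
    have := ((ha.pow (k+1)).sub (hb.pow (k+1))).sub hc
    refine this.congr_deriv ?_
    push_cast
    ring
  have hdpos : ∀ t ∈ Set.Ioo (0:ℝ) 1, 0 < deriv g t := by
    intro t ht
    rw [(hderiv t).deriv]
    have hmem1 : (1 + t/2 : ℝ) ∈ Ici (0:ℝ) := by simp; nlinarith [ht.1]
    have hmem2 : (1 - t/2 : ℝ) ∈ Ici (0:ℝ) := by simp; nlinarith [ht.2]
    have hne : (1 + t/2 : ℝ) ≠ 1 - t/2 := by nlinarith [ht.1]
    have hcv := (strictConvexOn_pow hk).2 hmem1 hmem2 hne (by norm_num : (0:ℝ) < 1/2)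
      (by norm_num : (0:ℝ) < 1/2) (by norm_num)
    simp only [smul_eq_mul] at hcv
    have h1 : ((1:ℝ)/2 * (1 + t/2) + 1/2 * (1 - t/2)) = 1 := by ring
    rw [h1, one_pow] at hcv
    have hk0 : (0:ℝ) < (k:ℝ) + 1 := by positivity
    nlinarith [hcv]
  have hcont : ContinuousOn g (Icc (0:ℝ) 1) := fun t _ => ((hderiv t).continuousAt).continuousWithinAt
  have hmono : StrictMonoOn g (Icc (0:ℝ) 1) :=
    strictMonoOn_of_deriv_pos (convex_Icc 0 1) hcont (by simpa [interior_Icc] using hdpos)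
  have h0 : g 0 < g α := hmono (left_mem_Icc.mpr zero_le_one) hα hαpos
  have hg0 : g 0 = 0 := by simp [hg]
  have hgα : g α = 0 := by simp [hg, heq]
  rw [hg0, hgα] at h0
  exact lt_irrefl 0 h0
end

section
/- Let k ≥ 2, n > k be integers and let β ∈ (0,1) satisfy (1 + β^{n−1}/2)^{k+1} − (1 − β^{n−1}/2)^{k+1} = (k+1)·β^{n−k}. Suppose the denominator D = (1/(k+2))·[(1 + β^{n−1}/2)^{k+2} − (1 − β^{n−1}/2)^{k+2}] − β^{n−k} is nonzero, and set γ = β^{3n−k−2}/D. Then f(t) = β + β^n·(t − 1/2) satisfies ∫₀¹ (1 + γ(t−1/2)(u−1/2))·f(u)^k du = f(t) for all t ∈ [0,1]. -/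
theorem stmt17 (k n : ℕ) (hk : 2 ≤ k) (hn : k < n) (β : ℝ) (hβ : β ∈ Set.Ioo (0:ℝ) 1)
    (heq : (1 + β^(n-1)/2)^(k+1) - (1 - β^(n-1)/2)^(k+1) = ((k:ℝ)+1) * β^(n-k))
    (D : ℝ)
    (hD : D = (1/((k:ℝ)+2)) * ((1 + β^(n-1)/2)^(k+2) - (1 - β^(n-1)/2)^(k+2)) - β^(n-k))
    (hD0 : D ≠ 0) (γ : ℝ) (hγ : γ = β^(3*n-k-2) / D)
    (t : ℝ) (ht : t ∈ Set.Icc (0:ℝ) 1) :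
    ∫ u in (0:ℝ)..1,
      (1 + γ * (t - 1/2) * (u - 1/2)) * (β + β^n * (u - 1/2))^k
      = β + β^n * (t - 1/2) := by
  have hβ0 : β ≠ 0 := ne_of_gt hβ.1
  have hbne : (β:ℝ)^n ≠ 0 := pow_ne_zero _ hβ0
  have hk1 : ((k:ℝ)+1) ≠ 0 := by positivity
  have hk2 : ((k:ℝ)+2) ≠ 0 := by positivity
  set c : ℝ := γ * (t - 1/2) with hc
  set A : ℝ := 1 + β^(n-1)/2 with hA
  set B : ℝ := 1 - β^(n-1)/2 with hBdef
  -- antiderivative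
  have hf : ∀ u : ℝ, HasDerivAt (fun u : ℝ => β + β^n * (u - 1/2)) (β^n) u := by
    intro u
    exact ((hasDerivAt_const u β).add (((hasDerivAt_id u).sub_const (1/2)).const_mul (β^n))).congr_deriv (by ring)
  have hderiv : ∀ u ∈ Set.uIcc (0:ℝ) 1,
      HasDerivAt (fun u : ℝ =>
        (β + β^n * (u - 1/2))^(k+1) / (((k:ℝ)+1) * β^n)
        + c * ((β + β^n * (u - 1/2))^(k+2) / (((k:ℝ)+2) * (β^n)^2)
            - β * (β + β^n * (u - 1/2))^(k+1) / (((k:ℝ)+1) * (β^n)^2)))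
      ((1 + c * (u - 1/2)) * (β + β^n * (u - 1/2))^k) u := by
    intro u _
    have h1 := (hf u).pow (k+1)
    have h2 := (hf u).pow (k+2)
    simp only [Nat.add_sub_cancel] at h1 h2
    have := (h1.div_const (((k:ℝ)+1) * β^n)).add
      (((h2.div_const (((k:ℝ)+2) * (β^n)^2)).sub
        ((h1.const_mul β).div_const (((k:ℝ)+1) * (β^n)^2))).const_mul c)
    refine this.congr_deriv ?_
    push_cast
    field_simp
    ring
  have hInt : IntervalIntegrable
      (fun u : ℝ => (1 + c * (u - 1/2)) * (β + β^n * (u - 1/2))^k)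
      MeasureTheory.volume 0 1 := by
    apply Continuous.intervalIntegrable
    fun_prop
  have hint := intervalIntegral.integral_eq_sub_of_hasDerivAt hderiv hInt
  rw [show (fun u : ℝ => (1 + γ * (t - 1/2) * (u - 1/2)) * (β + β^n * (u - 1/2))^k)
      = (fun u : ℝ => (1 + c * (u - 1/2)) * (β + β^n * (u - 1/2))^k) from rfl] at *
  rw [hint]
  -- now pure algebra
  have hb : β^n = β^(n-1) * β := by rw [← pow_succ]; congr 1; omega
  have hfa : β + β^n * ((1:ℝ) - 1/2) = β * A := by rw [hb, hA]; ring
  have hfb : β + β^n * ((0:ℝ) - 1/2) = β * B := by rw [hb, hBdef]; ring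
  have p1 : β^(k+1) * β^(n-k) = β * β^n := by
    rw [← pow_add, ← pow_succ']; congr 1; omega
  have p2 : β^(3*n-k-2) * β^(k+2) = β^n * ((β^n) * (β^n)) := by
    rw [← pow_add, ← pow_add, ← pow_add]; congr 1; omega
  have hE2 : A^(k+2) - B^(k+2) = ((k:ℝ)+2) * (D + β^(n-k)) := by
    rw [hD]
    field_simp
    ring
  simp only [hfa, hfb, mul_pow]
  have e1 : β^(k+1) * A^(k+1) / (((k:ℝ)+1) * β^n)
      - β^(k+1) * B^(k+1) / (((k:ℝ)+1) * β^n) = β := by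
    rw [div_sub_div_same, ← mul_sub, heq, div_eq_iff (by positivity : ((k:ℝ)+1) * β^n ≠ 0)]
    linear_combination ((k:ℝ)+1) * p1
  have e2 : c * (β^(k+2) * A^(k+2) / (((k:ℝ)+2) * (β^n)^2)
        - β * (β^(k+1) * A^(k+1)) / (((k:ℝ)+1) * (β^n)^2))
      - c * (β^(k+2) * B^(k+2) / (((k:ℝ)+2) * (β^n)^2)
        - β * (β^(k+1) * B^(k+1)) / (((k:ℝ)+1) * (β^n)^2))
      = β^n * (t - 1/2) := by
    have step : c * (β^(k+2) * A^(k+2) / (((k:ℝ)+2) * (β^n)^2)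
          - β * (β^(k+1) * A^(k+1)) / (((k:ℝ)+1) * (β^n)^2))
        - c * (β^(k+2) * B^(k+2) / (((k:ℝ)+2) * (β^n)^2)
          - β * (β^(k+1) * B^(k+1)) / (((k:ℝ)+1) * (β^n)^2))
        = c * ((β^(k+2) * (A^(k+2) - B^(k+2))) / (((k:ℝ)+2) * (β^n)^2)
          - β * (β^(k+1) * (A^(k+1) - B^(k+1))) / (((k:ℝ)+1) * (β^n)^2)) := by ring
    rw [step, heq, hE2, hc, hγ]
    field_simp
    linear_combination ((2*t-1)*D) * p2
  linear_combination e1 + e2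
end
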